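/- Let R₀¹ < R₀², δ¹, δ² > 0, λ¹, λ² > 0 and γʲ = λʲ/δʲ. Define the probability measure μ on [R₀¹, R₀²] × {1, 2} by μ(dr, 1) = ρ¹(r) dr and μ(dr, 2) = ρ²(r) dr, where ρ¹(r) = C (r − R₀¹)^{γ¹−1} (R₀² − r)^{γ²}, ρ²(r) = C (δ¹/δ²) (r − R₀¹)^{γ¹} (R₀² − r)^{γ²−1}, and C > 0 is the normalizing constant making μ a probability measure. Then for every function f : [R₀¹, R₀²] × {1, 2} → ℝ that is continuously differentiable in its first variable, ∫ L f dμ = 0, where L f(r, i) = δⁱ (R₀ⁱ − r) ∂_r f(r, i) + λⁱ (f(r, ī) − f(r, i)) and ī denotes the element of {1, 2} other than i. In other words, μ is an invariant (stationary) measure for the generator L of the one-species PDMP restricted to the extinction set. -/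

import Mathlib

open MeasureTheory intervalIntegral

/-- Density on state 1 of the invariant measure:
`ρ¹(r) = C (r − R₀¹)^(γ¹−1) (R₀² − r)^(γ²)`. -/
noncomputable def rho1 (C R01 R02 γ1 γ2 r : ℝ) : ℝ :=
  C * (r - R01) ^ (γ1 - 1) * (R02 - r) ^ γ2

/-- Density on state 2 of the invariant measure:
`ρ²(r) = C (δ¹/δ²) (r − R₀¹)^(γ¹) (R₀² − r)^(γ²−1)`. -/
noncomputable def rho2 (C δ1 δ2 R01 R02 γ1 γ2 r : ℝ) : ℝ :=
  C * (δ1 / δ2) * (r - R01) ^ γ1 * (R02 - r) ^ (γ2 - 1)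

/-- The measure with densities `(ρ¹, ρ²)` is invariant for the generator
`L f(r,i) = δⁱ(R₀ⁱ − r) ∂_r f(r,i) + λⁱ(f(r,ī) − f(r,i))` of the
one-species PDMP restricted to the extinction set: `∫ L f dμ = 0`. -/
theorem stmt6 (R01 R02 δ1 δ2 l1 l2 C : ℝ)
    (hR : R01 < R02) (hδ1 : 0 < δ1) (hδ2 : 0 < δ2)
    (hl1 : 0 < l1) (hl2 : 0 < l2) (hC : 0 < C)
    -- `C` is the normalizing constant making `μ` a probability measure
    (hnorm : ∫ r in R01..R02,
        (rho1 C R01 R02 (l1 / δ1) (l2 / δ2) r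
          + rho2 C δ1 δ2 R01 R02 (l1 / δ1) (l2 / δ2) r) = 1)
    (f1 f2 : ℝ → ℝ) (hf1 : ContDiff ℝ 1 f1) (hf2 : ContDiff ℝ 1 f2) :
    ∫ r in R01..R02,
      ((δ1 * (R01 - r) * deriv f1 r + l1 * (f2 r - f1 r))
          * rho1 C R01 R02 (l1 / δ1) (l2 / δ2) r
        + (δ2 * (R02 - r) * deriv f2 r + l2 * (f1 r - f2 r))
          * rho2 C δ1 δ2 R01 R02 (l1 / δ1) (l2 / δ2) r) = 0 := by
  set γ1 : ℝ := l1 / δ1 with hγ1def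
  set γ2 : ℝ := l2 / δ2 with hγ2def
  have hγ1 : 0 < γ1 := div_pos hl1 hδ1
  have hγ2 : 0 < γ2 := div_pos hl2 hδ2
  have hδγ1 : δ1 * γ1 = l1 := by rw [hγ1def]; field_simp [hδ1.ne']
  have hδγ2 : δ2 * γ2 = l2 := by rw [hγ2def]; field_simp [hδ2.ne']
  set F : ℝ → ℝ := fun r =>
      (δ1 * (R01 - r) * deriv f1 r + l1 * (f2 r - f1 r)) * rho1 C R01 R02 γ1 γ2 r
        + (δ2 * (R02 - r) * deriv f2 r + l2 * (f1 r - f2 r)) * rho2 C δ1 δ2 R01 R02 γ1 γ2 r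
    with hF
  set G : ℝ → ℝ := fun r => δ1 * C * (r - R01) ^ γ1 * (R02 - r) ^ γ2 * (f2 r - f1 r) with hG
  have hcx : Continuous fun r : ℝ => (r - R01) ^ γ1 :=
    (Real.continuous_rpow_const hγ1.le).comp (continuous_id.sub continuous_const)
  have hcy : Continuous fun r : ℝ => (R02 - r) ^ γ2 :=
    (Real.continuous_rpow_const hγ2.le).comp (continuous_const.sub continuous_id)
  have hGcont : Continuous G := by
    exact (((continuous_const.mul hcx).mul hcy).mul
      ((hf2.continuous).sub (hf1.continuous)))
  -- derivative of G on the open interval equals F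
  have hderiv : ∀ r ∈ Set.Ioo R01 R02, HasDerivAt G (F r) r := by
    intro r hr
    have hx : (0:ℝ) < r - R01 := by simpa using hr.1
    have hy : (0:ℝ) < R02 - r := by simpa using hr.2
    have h1 : HasDerivAt (fun r => (r - R01) ^ γ1) (γ1 * (r - R01) ^ (γ1 - 1)) r := by
      have := (Real.hasDerivAt_rpow_const (x := r - R01) (p := γ1)
        (Or.inl hx.ne')).comp r ((hasDerivAt_id r).sub_const R01)
      simpa [Function.comp_def] using this
    have h2 : HasDerivAt (fun r => (R02 - r) ^ γ2) (-(γ2 * (R02 - r) ^ (γ2 - 1))) r := by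
      have := (Real.hasDerivAt_rpow_const (x := R02 - r) (p := γ2)
        (Or.inl hy.ne')).comp r ((hasDerivAt_id r).const_sub R02)
      simpa [Function.comp_def] using this
    have hd1 : HasDerivAt f1 (deriv f1 r) r :=
      (hf1.differentiable one_ne_zero r).hasDerivAt
    have hd2 : HasDerivAt f2 (deriv f2 r) r :=
      (hf2.differentiable one_ne_zero r).hasDerivAt
    have hGd := (((h1.const_mul (δ1 * C)).mul h2).mul (hd2.sub hd1))
    have key : F r = (δ1 * C * (γ1 * (r - R01) ^ (γ1 - 1)) * (R02 - r) ^ γ2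
          + δ1 * C * (r - R01) ^ γ1 * -(γ2 * (R02 - r) ^ (γ2 - 1)))
          * (f2 r - f1 r)
        + δ1 * C * (r - R01) ^ γ1 * (R02 - r) ^ γ2 * (deriv f2 r - deriv f1 r) := by
      have e1 : (r - R01) ^ γ1 = (r - R01) ^ (γ1 - 1) * (r - R01) := by
        have := Real.rpow_add_one hx.ne' (γ1 - 1)
        rw [sub_add_cancel] at this
        exact this
      have e2 : (R02 - r) ^ γ2 = (R02 - r) ^ (γ2 - 1) * (R02 - r) := by
        have := Real.rpow_add_one hy.ne' (γ2 - 1)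
        rw [sub_add_cancel] at this
        exact this
      have hδ2' : δ2 ≠ 0 := hδ2.ne'
      simp only [hF, rho1, rho2, e1, e2]
      rw [← hδγ1, ← hδγ2]
      field_simp
      ring
    rw [key]
    have : HasDerivAt G
        ((δ1 * C * (γ1 * (r - R01) ^ (γ1 - 1)) * (R02 - r) ^ γ2
          + δ1 * C * (r - R01) ^ γ1 * -(γ2 * (R02 - r) ^ (γ2 - 1)))
          * (f2 r - f1 r)
        + δ1 * C * (r - R01) ^ γ1 * (R02 - r) ^ γ2 * (deriv f2 r - deriv f1 r)) r := by
      have eq : G = fun r => δ1 * C * (r - R01) ^ γ1 * (R02 - r) ^ γ2 * (f2 r - f1 r) := rfl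
      rw [eq]
      exact hGd
    exact this
  -- integrability of F
  have hρ1 : IntervalIntegrable (fun r => rho1 C R01 R02 γ1 γ2 r) volume R01 R02 := by
    have h : IntervalIntegrable (fun x : ℝ => x ^ (γ1 - 1)) volume 0 (R02 - R01) :=
      intervalIntegral.intervalIntegrable_rpow' (by linarith)
    have h' := h.comp_sub_right R01
    rw [zero_add, sub_add_cancel] at h'
    have h2 := h'.mul_continuousOn (g := fun r => C * (R02 - r) ^ γ2)
      ((continuous_const.mul hcy).continuousOn)
    have : (fun r => rho1 C R01 R02 γ1 γ2 r)
        = fun r => (r - R01) ^ (γ1 - 1) * (C * (R02 - r) ^ γ2) := by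
      funext r; simp only [rho1]; ring
    rw [this]; exact h2
  have hρ2 : IntervalIntegrable (fun r => rho2 C δ1 δ2 R01 R02 γ1 γ2 r) volume R01 R02 := by
    have h : IntervalIntegrable (fun x : ℝ => x ^ (γ2 - 1)) volume 0 (R02 - R01) :=
      intervalIntegral.intervalIntegrable_rpow' (by linarith)
    have h' := (h.comp_sub_left R02).symm
    rw [sub_zero, sub_sub_cancel] at h'
    have h2 := h'.mul_continuousOn (g := fun r => C * (δ1 / δ2) * (r - R01) ^ γ1)
      ((continuous_const.mul hcx).continuousOn)
    have : (fun r => rho2 C δ1 δ2 R01 R02 γ1 γ2 r)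
        = fun r => (R02 - r) ^ (γ2 - 1) * (C * (δ1 / δ2) * (r - R01) ^ γ1) := by
      funext r; simp only [rho2]; ring
    rw [this]; exact h2
  have hA : Continuous fun r => δ1 * (R01 - r) * deriv f1 r + l1 * (f2 r - f1 r) := by
    exact ((continuous_const.mul (continuous_const.sub continuous_id)).mul
        (hf1.continuous_deriv le_rfl)).add
      (continuous_const.mul (hf2.continuous.sub hf1.continuous))
  have hB : Continuous fun r => δ2 * (R02 - r) * deriv f2 r + l2 * (f1 r - f2 r) := by
    exact ((continuous_const.mul (continuous_const.sub continuous_id)).mul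
        (hf2.continuous_deriv le_rfl)).add
      (continuous_const.mul (hf1.continuous.sub hf2.continuous))
  have hFint : IntervalIntegrable F volume R01 R02 :=
    (hρ1.continuousOn_mul hA.continuousOn).add (hρ2.continuousOn_mul hB.continuousOn)
  have hFTC := intervalIntegral.integral_eq_sub_of_hasDeriv_right_of_le hR.le
    hGcont.continuousOn (fun x hx => (hderiv x hx).hasDerivWithinAt) hFint
  have hG1 : G R01 = 0 := by
    simp [hG, Real.zero_rpow hγ1.ne']
  have hG2 : G R02 = 0 := by
    simp [hG, Real.zero_rpow hγ2.ne']
  calc ∫ r in R01..R02, F r = G R02 - G R01 := hFTC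
    _ = 0 := by rw [hG1, hG2, sub_zero]
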